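/- For any subset A of a topological space X, the e*-θ-closure operator is idempotent: e*-cl_θ(e*-cl_θ(A)) = e*-cl_θ(A). -/
import Mathlib


open Set Topology

variable {X : Type*} [TopologicalSpace X]

/-- δ-closure of A. -/
def deltaCl (A : Set X) : Set X :=
  {x | ∀ U : Set X, IsOpen U → x ∈ U → (interior (closure U) ∩ A).Nonempty}

/-- A is e*-open if A ⊆ cl(int(δ-cl A)). -/
def EStarOpen (A : Set X) : Prop := A ⊆ closure (interior (deltaCl A))

/-- A is e*-closed if its complement is e*-open. -/
def EStarClosed (A : Set X) : Prop := EStarOpen Aᶜ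

/-- e*-closure: intersection of all e*-closed supersets. -/
def eStarCl (A : Set X) : Set X := ⋂₀ {F | EStarClosed F ∧ A ⊆ F}

/-- e*-interior: union of all e*-open subsets. -/
def eStarInt (A : Set X) : Set X := ⋃₀ {U | EStarOpen U ∧ U ⊆ A}

/-- e*-regular: both e*-open and e*-closed. -/
def EStarRegular (A : Set X) : Prop := EStarOpen A ∧ EStarClosed A

/-- e*-θ-closure. -/
def eStarClTheta (A : Set X) : Set X :=
  {x | ∀ U : Set X, EStarOpen U → x ∈ U → (eStarCl U ∩ A).Nonempty}

/-- e*-θ-closed. -/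
def EStarThetaClosed (A : Set X) : Prop := A = eStarClTheta A

/-- e*-θ-open. -/
def EStarThetaOpen (A : Set X) : Prop := EStarThetaClosed Aᶜ

/-- quasi e*-θ-closed. -/
def QEStarThetaClosed (A : Set X) : Prop :=
  ∀ U : Set X, EStarThetaOpen U → A ⊆ U → eStarClTheta A ⊆ U

/-- e*-θ-kernel. -/
def eStarKerTheta (A : Set X) : Set X := ⋂₀ {U | EStarThetaOpen U ∧ A ⊆ U}

lemma subset_deltaCl (A : Set X) : A ⊆ deltaCl A := by
  intro x hx U hU hxU
  exact ⟨x, ⟨interior_maximal subset_closure hU hxU, hx⟩⟩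

lemma deltaCl_mono {A B : Set X} (h : A ⊆ B) : deltaCl A ⊆ deltaCl B := by
  intro x hx U hU hxU
  obtain ⟨y, hy1, hy2⟩ := hx U hU hxU
  exact ⟨y, hy1, h hy2⟩

lemma eStarOpen_of_isOpen {A : Set X} (h : IsOpen A) : EStarOpen A := by
  intro x hx
  apply subset_closure
  exact interior_mono (subset_deltaCl A) (h.subset_interior_iff.mpr subset_rfl hx)

lemma eStarOpen_sUnion {S : Set (Set X)} (h : ∀ U ∈ S, EStarOpen U) :
    EStarOpen (⋃₀ S) := by
  intro x hx
  obtain ⟨U, hU, hxU⟩ := hx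
  exact closure_mono (interior_mono (deltaCl_mono (subset_sUnion_of_mem hU))) (h U hU hxU)

lemma eStarClosed_eStarCl (A : Set X) : EStarClosed (eStarCl A) := by
  have : (eStarCl A)ᶜ = ⋃₀ (compl '' {F | EStarClosed F ∧ A ⊆ F}) := by
    simp [eStarCl, Set.compl_sInter, Set.sUnion_image]
  rw [EStarClosed, this]
  apply eStarOpen_sUnion
  rintro U ⟨F, ⟨hF, _⟩, rfl⟩
  exact hF

lemma subset_eStarCl (A : Set X) : A ⊆ eStarCl A := by
  intro x hx F ⟨_, hAF⟩
  exact hAF hx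

lemma eStarCl_subset {A F : Set X} (hF : EStarClosed F) (h : A ⊆ F) : eStarCl A ⊆ F :=
  fun _ hx => hx F ⟨hF, h⟩

lemma eStarCl_of_closed {A : Set X} (h : EStarClosed A) : eStarCl A = A :=
  subset_antisymm (eStarCl_subset h subset_rfl) (subset_eStarCl A)

lemma eStarClosed_cl_int_deltaCl (A : Set X) : EStarClosed (closure (interior (deltaCl A))) := by
  apply eStarOpen_of_isOpen
  exact isClosed_closure.isOpen_compl

lemma eStarOpen_eStarCl {A : Set X} (h : EStarOpen A) : EStarOpen (eStarCl A) := by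
  have h1 : eStarCl A ⊆ closure (interior (deltaCl A)) :=
    eStarCl_subset (eStarClosed_cl_int_deltaCl A) h
  exact h1.trans (closure_mono (interior_mono (deltaCl_mono (subset_eStarCl A))))

theorem stmt7 (A : Set X) : eStarClTheta (eStarClTheta A) = eStarClTheta A := by
  apply subset_antisymm
  · intro x hx U hU hxU
    obtain ⟨y, hyU, hyA⟩ := hx U hU hxU
    obtain ⟨z, hz1, hz2⟩ := hyA (eStarCl U) (eStarOpen_eStarCl hU) hyU
    rw [eStarCl_of_closed (eStarClosed_eStarCl U)] at hz1
    exact ⟨z, hz1, hz2⟩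
  · intro x hx U hU hxU
    exact ⟨x, subset_eStarCl U hxU, hx⟩
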